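/- Let μ be the Gaussian measure N(m, s²) on ℝ with s > 0, η ∈ [0,1), and α ∈ [0,1] with (1-α)/(1-η) ≤ 1. Let I be the central interval [m - z·s, m + z·s] where z is chosen so that μ(I) = (1-α)/(1-η). Then for any measurable set R ⊆ ℝ satisfying (1-η)·μ(R) ≥ 1 - α, the Lebesgue measure of R is at least the Lebesgue measure (length) of I. -/

import Mathlib

open MeasureTheory ProbabilityTheory
open scoped NNReal ENNReal

lemma gaussianPDFReal_anti (m : ℝ) (v : ℝ≥0) {x y : ℝ}
    (h : (x - m) ^ 2 ≤ (y - m) ^ 2) :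
    gaussianPDFReal m v y ≤ gaussianPDFReal m v x := by
  rcases eq_or_ne v 0 with rfl | hv0
  · simp [gaussianPDFReal_zero_var]
  have hv : (0:ℝ) < v := by positivity
  unfold gaussianPDFReal
  have h2v : (0:ℝ) < 2 * v := by positivity
  gcongr

/-- Among measurable sets `R` with `(1-η)·μ(R) ≥ 1-α` (μ Gaussian `N(m,s²)`),
the central interval with Gaussian mass `(1-α)/(1-η)` has minimal Lebesgue measure. -/
theorem stmt7 (m s η α z : ℝ) (hs : 0 < s) (hη0 : 0 ≤ η) (hη1 : η < 1)
    (hα : α ∈ Set.Icc (0:ℝ) 1) (hratio : (1 - α) / (1 - η) ≤ 1)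
    (hz : ((gaussianReal m ⟨s ^ 2, sq_nonneg s⟩)
        (Set.Icc (m - z * s) (m + z * s))).toReal = (1 - α) / (1 - η)) :
    ∀ R : Set ℝ, MeasurableSet R →
      1 - α ≤ (1 - η) * ((gaussianReal m ⟨s ^ 2, sq_nonneg s⟩) R).toReal →
      volume (Set.Icc (m - z * s) (m + z * s)) ≤ volume R := by
  intro R hR hRm
  set v : ℝ≥0 := ⟨s ^ 2, sq_nonneg s⟩ with hv
  have hv0 : v ≠ 0 := by
    intro h
    have h2 : (v:ℝ) = 0 := by exact_mod_cast congrArg NNReal.toReal h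
    rw [hv] at h2
    change s ^ 2 = 0 at h2
    nlinarith
  set μ := gaussianReal m v with hμ
  set I := Set.Icc (m - z * s) (m + z * s) with hI
  rcases lt_or_ge z 0 with hzneg | hz0
  · have : I = ∅ := Set.Icc_eq_empty (by nlinarith)
    simp [this]
  -- main case
  have hμd : μ = volume.withDensity (gaussianPDF m v) :=
    gaussianReal_of_var_ne_zero m hv0
  have hIμR : μ I ≤ μ R := by
    have h1 : 0 < 1 - η := by linarith
    have h2 : (1 - α) / (1 - η) ≤ (μ R).toReal := by
      rw [div_le_iff₀ h1]; nlinarith [hRm]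
    have := hz.le.trans h2
    exact (ENNReal.toReal_le_toReal (measure_ne_top μ I) (measure_ne_top μ R)).1 this
  set c : ℝ≥0∞ := gaussianPDF m v (m + z * s) with hc
  have hc0 : c ≠ 0 := by
    simp only [hc, gaussianPDF, ne_eq, ENNReal.ofReal_eq_zero, not_le]
    exact gaussianPDFReal_pos _ _ _ hv0
  have hctop : c ≠ ⊤ := ENNReal.ofReal_ne_top
  have hmI : MeasurableSet I := measurableSet_Icc
  -- pointwise bounds
  have hlow : ∀ x ∈ I, c ≤ gaussianPDF m v x := by
    intro x hx
    refine ENNReal.ofReal_le_ofReal (gaussianPDFReal_anti m v ?_)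
    obtain ⟨h1, h2⟩ := hx
    nlinarith
  have hhigh : ∀ x ∉ I, gaussianPDF m v x ≤ c := by
    intro x hx
    refine ENNReal.ofReal_le_ofReal (gaussianPDFReal_anti m v ?_)
    have hx' : x < m - z * s ∨ m + z * s < x := by
      by_contra hcon
      push_neg at hcon
      exact hx ⟨hcon.1, hcon.2⟩
    rcases hx' with h | h <;>
      nlinarith [mul_nonneg hz0 hs.le, sq_nonneg (x - m + z * s), sq_nonneg (x - m - z * s)]
  -- mass comparison of symmetric differences
  have hsplitI : μ (I ∩ R) + μ (I \ R) = μ I := measure_inter_add_diff I hR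
  have hsplitR : μ (R ∩ I) + μ (R \ I) = μ R := measure_inter_add_diff R hmI
  have hIR : μ (I \ R) ≤ μ (R \ I) := by
    have hcomm : μ (I ∩ R) = μ (R ∩ I) := by rw [Set.inter_comm]
    have := hIμR
    rw [← hsplitI, ← hsplitR, hcomm] at this
    exact ENNReal.le_of_add_le_add_left (measure_ne_top μ (R ∩ I)) this
  -- integral bounds
  have hmeas : Measurable (gaussianPDF m v) := measurable_gaussianPDF m v
  have hlb : c * volume (I \ R) ≤ μ (I \ R) := by
    rw [hμd, withDensity_apply _ (hmI.diff hR), ← setLIntegral_const]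
    exact setLIntegral_mono hmeas fun x hx => hlow x hx.1
  have hub : μ (R \ I) ≤ c * volume (R \ I) := by
    rw [hμd, withDensity_apply _ (hR.diff hmI), ← setLIntegral_const]
    exact setLIntegral_mono measurable_const fun x hx => hhigh x hx.2
  have hvol : volume (I \ R) ≤ volume (R \ I) :=
    (ENNReal.mul_le_mul_iff_right hc0 hctop).1 (hlb.trans (hIR.trans hub))
  calc volume I = volume (I ∩ R) + volume (I \ R) :=
        (measure_inter_add_diff I hR).symm
    _ ≤ volume (R ∩ I) + volume (R \ I) := by
        rw [Set.inter_comm]; exact add_le_add le_rfl hvol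
    _ = volume R := measure_inter_add_diff R hmI
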